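/- Zero slack value certifies robustness when the operational set is compact: let A : (Fin n → ℝ) →ₗ[ℝ] (Fin m → ℝ) and B : (Fin k → ℝ) →ₗ[ℝ] (Fin m → ℝ) be linear maps, b : Fin m → ℝ, x : Fin n → ℝ, and let K ⊆ (Fin k → ℝ) be a nonempty compact set. If the infimum of ∑_i δ i over the slack-feasible set {(y, δ) | y ∈ K, δ ≥ 0 componentwise, B y + δ ≥ b − A x componentwise} equals 0, then there exists y ∈ K with (B y) i ≥ b i − (A x) i for all i, i.e., the energy system with capacities x is robust for the given data. -/
import Mathlib


/-- Zero slack optimal value certifies robustness when the set of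
admissible operational decisions is compact. -/
theorem robust_of_slack_value_zero {n m k : ℕ}
    (A : (Fin n → ℝ) →ₗ[ℝ] (Fin m → ℝ)) (B : (Fin k → ℝ) →ₗ[ℝ] (Fin m → ℝ))
    (b : Fin m → ℝ) (x : Fin n → ℝ) (K : Set (Fin k → ℝ))
    (hKne : K.Nonempty) (hKcomp : IsCompact K)
    (hval : sInf ((fun yδ : (Fin k → ℝ) × (Fin m → ℝ) => ∑ i, yδ.2 i) ''
      {yδ : (Fin k → ℝ) × (Fin m → ℝ) | yδ.1 ∈ K ∧ (∀ i, 0 ≤ yδ.2 i) ∧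
        ∀ i, (B yδ.1) i + yδ.2 i ≥ b i - (A x) i}) = 0) :
    ∃ y ∈ K, ∀ i, (B y) i ≥ b i - (A x) i := by
  set g : (Fin k → ℝ) → ℝ := fun y => ∑ i, max (b i - (A x) i - (B y) i) 0 with hg
  have hgcont : Continuous g := by
    apply continuous_finset_sum
    intro i _
    exact ((continuous_const.sub
      ((continuous_apply i).comp B.continuous_of_finiteDimensional)).max continuous_const)
  obtain ⟨y₀, hy₀K, hmin⟩ := hKcomp.exists_isMinOn hKne hgcont.continuousOn
  have hgnonneg : ∀ y, 0 ≤ g y := fun y =>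
    Finset.sum_nonneg fun i _ => le_max_right _ _
  -- g y₀ ≤ 0, since g y₀ lower-bounds the image set
  have hle : g y₀ ≤ 0 := by
    rw [← hval]
    apply le_csInf
    · obtain ⟨y, hy⟩ := hKne
      exact ⟨_, ⟨(y, fun i => max (b i - (A x) i - (B y) i) 0),
        ⟨hy, fun i => le_max_right _ _, fun i => by
          have := le_max_left (b i - (A x) i - (B y) i) 0
          dsimp; linarith⟩, rfl⟩⟩
    · rintro v ⟨⟨y, δ⟩, ⟨hyK, hδ, hfeas⟩, rfl⟩
      have h1 : g y₀ ≤ g y := hmin hyK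
      have h2 : g y ≤ ∑ i, δ i := by
        apply Finset.sum_le_sum
        intro i _
        have := hfeas i
        exact max_le (by linarith) (hδ i)
      dsimp only
      linarith
  have hzero : g y₀ = 0 := le_antisymm hle (hgnonneg y₀)
  refine ⟨y₀, hy₀K, fun i => ?_⟩
  have hterm : max (b i - (A x) i - (B y₀) i) 0 = 0 := by
    have := (Finset.sum_eq_zero_iff_of_nonneg
      (fun j _ => le_max_right (b j - (A x) j - (B y₀) j) 0)).mp hzero i (Finset.mem_univ i)
    exact this
  have := le_max_left (b i - (A x) i - (B y₀) i) 0
  rw [hterm] at this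
  linarith
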